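/- Let (X_t) be a martingale difference sequence with respect to a filtration (F_t), with |X_t| ≤ R almost surely. Then for any δ ∈ (0,1) and η ∈ (0, 1/R], with probability at least 1−δ, for all t ≥ 1: ∑_{s=1}^t X_s ≤ (e−2)·η·∑_{s=1}^t E[X_s² | F_{s−1}] + (1/η)·log(1/δ). -/

import Mathlib

open MeasureTheory Finset Real
open scoped NNReal ENNReal


open MeasureTheory Finset
open scoped NNReal ENNReal


lemma exp_one_gt : (2.5:ℝ) < Real.exp 1 := by
  have := Real.exp_one_gt_d9; linarith

lemma exp_one_lt : Real.exp 1 < 2.72 := by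
  have := Real.exp_one_lt_d9; linarith

/-- Key elementary inequality: for `x ≤ 1`, `exp x ≤ 1 + x + (e-2) x²`. -/
lemma key_exp_ineq {x : ℝ} (hx : x ≤ 1) :
    Real.exp x ≤ 1 + x + (Real.exp 1 - 2) * x ^ 2 := by
  set c : ℝ := Real.exp 1 - 2 with hc
  have hc1 : (1/2:ℝ) < c := by have := exp_one_gt; simp [hc]; linarith
  have hc2 : c < 1 := by have := exp_one_lt; simp [hc]; linarith
  set f : ℝ → ℝ := fun x => 1 + x + c * x ^ 2 - Real.exp x with hf
  set f' : ℝ → ℝ := fun x => 1 + 2 * c * x - Real.exp x with hf'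
  have hder : ∀ y : ℝ, HasDerivAt f (f' y) y := by
    intro y
    have h1 : HasDerivAt (fun x : ℝ => 1 + x + c * x ^ 2) (1 + 2 * c * y) y := by
      have : HasDerivAt (fun x : ℝ => 1 + x + c * x ^ 2) (0 + 1 + c * (2 * y ^ 1)) y := by
        exact (((hasDerivAt_const y (1:ℝ)).add (hasDerivAt_id y)).add
          ((hasDerivAt_pow 2 y).const_mul c))
      simpa [mul_comm, mul_assoc, mul_left_comm] using this
    exact h1.sub (Real.hasDerivAt_exp y)
  have hder' : ∀ y : ℝ, HasDerivAt f' (2 * c - Real.exp y) y := by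
    intro y
    have h1 : HasDerivAt (fun x : ℝ => 1 + 2 * c * x) (2 * c) y := by
      simpa using ((hasDerivAt_id y).const_mul (2*c)).const_add 1
    exact h1.sub (Real.hasDerivAt_exp y)
  have hderiv : deriv f = f' := funext fun y => (hder y).deriv
  have hderiv' : deriv f' = fun y => 2 * c - Real.exp y := funext fun y => (hder' y).deriv
  have hfc : Continuous f := by
    apply Continuous.sub _ Real.continuous_exp
    continuity
  have hf'c : Continuous f' := by
    apply Continuous.sub _ Real.continuous_exp
    continuity
  have hf0 : f 0 = 0 := by simp [f]
  have hf1 : f 1 = 0 := by simp [f, hc]; ring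
  set L : ℝ := Real.log (2 * c) with hL
  have h2c1 : (1:ℝ) < 2 * c := by linarith
  have hL0 : 0 < L := Real.log_pos h2c1
  have hL1 : L < 1 := by
    have : Real.log (2*c) < Real.log (Real.exp 1) := by
      apply Real.log_lt_log (by linarith)
      have := exp_one_gt
      simp [hc]; linarith
    simpa [Real.log_exp] using this
  have hexpL : Real.exp L = 2 * c := Real.exp_log (by linarith)
  -- Case 1: x ≤ 0
  rcases le_or_gt x 0 with h0 | h0
  · have hanti : AntitoneOn f (Set.Iic 0) := by
      apply antitoneOn_of_deriv_nonpos (convex_Iic 0) hfc.continuousOn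
        (fun y _ => ((hder y).differentiableAt).differentiableWithinAt)
      intro y hy
      rw [interior_Iic] at hy
      rw [hderiv]
      have hy' : y < 0 := hy
      have h1 : 2 * c * y ≤ y := by nlinarith
      have h2 : y + 1 ≤ Real.exp y := Real.add_one_le_exp y
      simp only [f']
      linarith
    have := hanti (Set.mem_Iic.2 h0) (Set.mem_Iic.2 le_rfl) h0
    rw [hf0] at this
    simp only [f] at this; linarith
  · -- x ∈ (0, 1]
    -- f' is monotone on [0, L], f'(0) = 0, so f' ≥ 0 on [0,L], so f monotone on [0,L]
    have hf'mono : MonotoneOn f' (Set.Icc 0 L) := by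
      apply monotoneOn_of_deriv_nonneg (convex_Icc 0 L) hf'c.continuousOn
        (fun y _ => ((hder' y).differentiableAt).differentiableWithinAt)
      intro y hy
      rw [interior_Icc] at hy
      rw [hderiv']
      have : Real.exp y ≤ Real.exp L := Real.exp_le_exp.2 hy.2.le
      simp only []
      rw [hexpL] at this; linarith
    have hf'0 : f' 0 = 0 := by simp [f']
    have hf'nonneg : ∀ y ∈ Set.Icc (0:ℝ) L, 0 ≤ f' y := by
      intro y hy
      have := hf'mono (Set.mem_Icc.2 ⟨le_rfl, hL0.le⟩) hy hy.1
      rw [hf'0] at this; exact this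
    have hfmono : MonotoneOn f (Set.Icc 0 L) := by
      apply monotoneOn_of_deriv_nonneg (convex_Icc 0 L) hfc.continuousOn
        (fun y _ => ((hder y).differentiableAt).differentiableWithinAt)
      intro y hy
      rw [hderiv]
      exact hf'nonneg y (interior_subset hy)
    have hfL : 0 ≤ f L := by
      have := hfmono (Set.mem_Icc.2 ⟨le_rfl, hL0.le⟩) (Set.mem_Icc.2 ⟨hL0.le, le_rfl⟩) hL0.le
      rw [hf0] at this; exact this
    rcases le_or_gt x L with hxL | hxL
    · have := hfmono (Set.mem_Icc.2 ⟨le_rfl, hL0.le⟩) (Set.mem_Icc.2 ⟨h0.le, hxL⟩) h0.le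
      rw [hf0] at this
      simp only [f] at this; linarith
    · -- x ∈ (L, 1]: f concave on [L,1]
      have hconc : ConcaveOn ℝ (Set.Icc L 1) f := by
        apply concaveOn_of_deriv2_nonpos (convex_Icc L 1) hfc.continuousOn
          (fun y _ => ((hder y).differentiableAt).differentiableWithinAt)
        · intro y _
          rw [hderiv]
          exact ((hder' y).differentiableAt).differentiableWithinAt
        · intro y hy
          rw [interior_Icc] at hy
          rw [show deriv^[2] f = deriv (deriv f) from rfl, hderiv, hderiv']
          have : Real.exp L ≤ Real.exp y := Real.exp_le_exp.2 hy.1.le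
          rw [hexpL] at this
          simp only []
          linarith
      have hxseg : x ∈ segment ℝ L (1:ℝ) := by
        rw [segment_eq_Icc hL1.le]
        exact ⟨hxL.le, hx⟩
      have := hconc.ge_on_segment (Set.mem_Icc.2 ⟨le_rfl, hL1.le⟩)
        (Set.mem_Icc.2 ⟨hL1.le, le_rfl⟩) hxseg
      rw [hf1, min_eq_right hfL] at this
      simp only [f] at this; linarith

lemma supermartingale_smul_le {Ω : Type*} {m0 : MeasurableSpace Ω} {μ : Measure Ω}
    [IsFiniteMeasure μ] {𝒢 : Filtration ℕ m0} {f : ℕ → Ω → ℝ}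
    (hf : Supermartingale f 𝒢 μ) (hnn : ∀ n ω, 0 ≤ f n ω) (ε : ℝ≥0) (n : ℕ) :
    ε • μ {ω | (ε : ℝ) ≤ (range (n + 1)).sup' nonempty_range_add_one fun k => f k ω} ≤
      ENNReal.ofReal (∫ ω, f 0 ω ∂μ) := by
  set τ := fun ω => ((hittingBtwn f {y : ℝ | (ε:ℝ) ≤ y} 0 n ω : ℕ) : WithTop ℕ) with hτdef
  have hτ : IsStoppingTime 𝒢 τ :=
    hf.stronglyAdapted.adapted.isStoppingTime_hittingBtwn measurableSet_Ici
  have hτle : ∀ ω, τ ω ≤ n := fun ω =>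
    WithTop.coe_le_coe.2 (hittingBtwn_le (u := f) (s := {y : ℝ | (ε:ℝ) ≤ y}) (n := 0) ω)
  have hint : Integrable (stoppedValue f τ) μ :=
    integrable_stoppedValue ℕ hτ hf.integrable hτle
  have hn : Set.Icc 0 n = {k | k ≤ n} := by ext x; simp
  have hset : ∀ ω, ((ε : ℝ) ≤ (range (n + 1)).sup' nonempty_range_add_one fun k => f k ω) →
      (ε : ℝ) ≤ stoppedValue f τ ω := by
    intro x hx
    simp_rw [le_sup'_iff, mem_range, Nat.lt_succ_iff] at hx
    refine stoppedValue_hittingBtwn_mem ?_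
    simp only [Set.mem_setOf_eq, exists_prop, hn]
    exact let ⟨j, hj₁, hj₂⟩ := hx; ⟨j, hj₁, hj₂⟩
  have hmeas : MeasurableSet {ω | (ε : ℝ) ≤ (range (n + 1)).sup' nonempty_range_add_one
      fun k => f k ω} :=
    measurableSet_le measurable_const
      (Finset.measurable_range_sup'' fun k _ => (hf.stronglyMeasurable k).measurable.le (𝒢.le k))
  have h := setIntegral_ge_of_const_le hmeas (measure_ne_top _ _) hset hint.integrableOn
  rw [smul_eq_mul, mul_comm] at h
  -- ∫ in set ≤ ∫ over everything
  have h2 : ∫ ω in {ω | (ε : ℝ) ≤ (range (n + 1)).sup' nonempty_range_add_one fun k => f k ω},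
      stoppedValue f τ ω ∂μ ≤ ∫ ω, stoppedValue f τ ω ∂μ :=
    setIntegral_le_integral hint (Filter.Eventually.of_forall fun ω => hnn _ _)
  -- optional stopping for the supermartingale
  have h3 : ∫ ω, stoppedValue f τ ω ∂μ ≤ ∫ ω, f 0 ω ∂μ := by
    have hsub : Submartingale (-f) 𝒢 μ := hf.neg
    have := hsub.expected_stoppedValue_mono (isStoppingTime_const 𝒢 0) hτ
      (fun ω => WithTop.coe_le_coe.2 (Nat.zero_le _)) hτle
    have he1 : stoppedValue (-f) (fun _ => ((0 : ℕ) : WithTop ℕ)) = fun ω => -(f 0 ω) := rfl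
    have he2 : stoppedValue (-f) τ = fun ω => -(stoppedValue f τ ω) := rfl
    change ∫ x, -(f 0 x) ∂μ ≤ ∫ x, -(stoppedValue f τ x) ∂μ at this
    rw [integral_neg, integral_neg] at this
    simpa using this
  rw [ENNReal.le_ofReal_iff_toReal_le, ENNReal.toReal_smul]
  · exact le_trans h (le_trans h2 h3)
  · exact ENNReal.mul_ne_top (by simp) (measure_ne_top _ _)
  · exact le_trans (mul_nonneg ε.coe_nonneg ENNReal.toReal_nonneg) (le_trans h (le_trans h2 h3))

lemma supermartingale_smul_le_all {Ω : Type*} {m0 : MeasurableSpace Ω} {μ : Measure Ω}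
    [IsFiniteMeasure μ] {𝒢 : Filtration ℕ m0} {f : ℕ → Ω → ℝ}
    (hf : Supermartingale f 𝒢 μ) (hnn : ∀ n ω, 0 ≤ f n ω) (ε : ℝ≥0) :
    ε • μ {ω | ∃ k, (ε : ℝ) ≤ f k ω} ≤ ENNReal.ofReal (∫ ω, f 0 ω ∂μ) := by
  set A : ℕ → Set Ω := fun n =>
    {ω | (ε : ℝ) ≤ (range (n + 1)).sup' nonempty_range_add_one fun k => f k ω} with hA
  have hAmeas : ∀ n, MeasurableSet (A n) := fun n =>
    measurableSet_le measurable_const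
      (Finset.measurable_range_sup'' fun k _ => (hf.stronglyMeasurable k).measurable.le (𝒢.le k))
  have hmono : Monotone A := by
    intro a b hab ω hω
    simp only [A, Set.mem_setOf_eq, le_sup'_iff, mem_range, Nat.lt_succ_iff] at hω ⊢
    obtain ⟨j, hj1, hj2⟩ := hω
    exact ⟨j, hj1.trans hab, hj2⟩
  have hunion : {ω | ∃ k, (ε : ℝ) ≤ f k ω} = ⋃ n, A n := by
    ext ω
    simp only [Set.mem_setOf_eq, Set.mem_iUnion, A, le_sup'_iff, mem_range, Nat.lt_succ_iff]
    constructor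
    · rintro ⟨k, hk⟩; exact ⟨k, k, le_rfl, hk⟩
    · rintro ⟨n, j, _, hj⟩; exact ⟨j, hj⟩
  rw [hunion, hmono.directed_le.measure_iUnion, ENNReal.smul_def, smul_eq_mul, ENNReal.mul_iSup]
  refine iSup_le fun n => ?_
  have h := supermartingale_smul_le hf hnn ε n
  rwa [ENNReal.smul_def, smul_eq_mul] at h

theorem martingale_difference_concentration {Ω : Type*} {m0 : MeasurableSpace Ω}
    (μ : Measure Ω) [IsProbabilityMeasure μ]
    (ℱ : Filtration ℕ m0) (X : ℕ → Ω → ℝ) (R : ℝ) (hR : 0 < R)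
    (hadapted : Adapted ℱ X)
    (hmds : ∀ s : ℕ, 1 ≤ s → μ[X s | ℱ (s - 1)] =ᵐ[μ] 0)
    (hbdd : ∀ s : ℕ, ∀ᵐ ω ∂μ, |X s ω| ≤ R)
    (δ η : ℝ) (hδ : δ ∈ Set.Ioo (0 : ℝ) 1) (hη : η ∈ Set.Ioc (0 : ℝ) (1 / R)) :
    (1 : ℝ) - δ ≤ (μ {ω | ∀ t : ℕ, 1 ≤ t →
      ∑ s ∈ Finset.Icc 1 t, X s ω
        ≤ (Real.exp 1 - 2) * η * ∑ s ∈ Finset.Icc 1 t, (μ[(X s) ^ 2 | ℱ (s - 1)]) ω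
          + (1 / η) * Real.log (1 / δ)}).toReal := by
  obtain ⟨hδ0, hδ1⟩ := hδ
  obtain ⟨hη0, hηR⟩ := hη
  have hηR1 : η * R ≤ 1 := by
    have := (le_div_iff₀ hR).1 hηR
    linarith
  set c : ℝ := Real.exp 1 - 2 with hcdef
  have hc0 : 0 < c := by have := exp_one_gt; simp only [hcdef]; linarith
  set S : ℕ → Ω → ℝ := fun t ω => ∑ s ∈ Finset.Icc 1 t, X s ω with hSdef
  set V : ℕ → Ω → ℝ := fun t ω => ∑ s ∈ Finset.Icc 1 t, (μ[(X s) ^ 2 | ℱ (s - 1)]) ω with hVdef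
  set G : ℕ → Ω → ℝ := fun t ω => Real.exp (η * S t ω - c * η ^ 2 * V t ω) with hGdef
  have hGpos : ∀ t ω, 0 < G t ω := fun t ω => Real.exp_pos _
  -- basic integrability of X, X²
  have hXm : ∀ s, StronglyMeasurable (X s) := fun s => ((hadapted s).mono (ℱ.le s) le_rfl).stronglyMeasurable
  have hXint : ∀ s, Integrable (X s) μ := by
    intro s
    refine (integrable_const R).mono' (hXm s).aestronglyMeasurable ?_
    filter_upwards [hbdd s] with ω h using by simpa [Real.norm_eq_abs] using h
  have hX2int : ∀ s, Integrable ((X s) ^ 2) μ := by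
    intro s
    refine (integrable_const (R ^ 2)).mono' ((hXm s).pow 2).aestronglyMeasurable ?_
    filter_upwards [hbdd s] with ω h
    have : (X s ω) ^ 2 ≤ R ^ 2 := by
      rw [← sq_abs]; exact pow_le_pow_left₀ (abs_nonneg _) h 2
    simpa [Real.norm_eq_abs, abs_of_nonneg (sq_nonneg (X s ω))] using this
  -- a.e. nonnegativity of the conditional variances
  have hVterm_nonneg : ∀ s : ℕ, 0 ≤ᵐ[μ] μ[(X s) ^ 2 | ℱ (s - 1)] := fun s =>
    condExp_nonneg (Filter.Eventually.of_forall fun ω => by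
      simp only [Pi.pow_apply, Pi.zero_apply]; positivity)
  -- measurability of S, V, G
  have hSmeas : ∀ t, StronglyMeasurable[ℱ t] (S t) := by
    intro t
    have : S t = ∑ s ∈ Finset.Icc 1 t, X s := by
      funext ω; simp [hSdef, Finset.sum_apply]
    rw [this]
    exact Finset.stronglyMeasurable_sum _ fun s hs =>
      ((hadapted s).mono (ℱ.mono (Finset.mem_Icc.1 hs).2) le_rfl).stronglyMeasurable
  have hVmeas : ∀ t u, t ≤ u + 1 → StronglyMeasurable[ℱ u] (V t) := by
    intro t u htu
    have : V t = ∑ s ∈ Finset.Icc 1 t, μ[(X s) ^ 2 | ℱ (s - 1)] := by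
      funext ω; simp [hVdef, Finset.sum_apply]
    rw [this]
    refine Finset.stronglyMeasurable_sum _ fun s hs => ?_
    refine stronglyMeasurable_condExp.mono (ℱ.mono ?_)
    have hs2 := (Finset.mem_Icc.1 hs).2
    omega
  have hGadp : StronglyAdapted ℱ G := by
    intro t
    exact Real.continuous_exp.comp_stronglyMeasurable
      (((hSmeas t).const_mul η).sub ((hVmeas t t (Nat.le_succ t)).const_mul (c * η ^ 2)))
  -- a.e. bound on G
  have hGbd : ∀ t, ∀ᵐ ω ∂μ, G t ω ≤ Real.exp (η * (t * R)) := by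
    intro t
    filter_upwards [ae_all_iff.2 hbdd, ae_all_iff.2 hVterm_nonneg] with ω hb hv
    have hS : S t ω ≤ t * R := by
      calc S t ω ≤ ∑ s ∈ Finset.Icc 1 t, R :=
            Finset.sum_le_sum fun s _ => (abs_le.1 (hb s)).2
        _ = t * R := by
            rw [Finset.sum_const, Nat.card_Icc]
            simp [nsmul_eq_mul]
    have hV : 0 ≤ V t ω := Finset.sum_nonneg fun s _ => hv s
    apply Real.exp_le_exp.2
    have h1 : η * S t ω ≤ η * (t * R) := mul_le_mul_of_nonneg_left hS hη0.le
    nlinarith [sq_nonneg η, mul_nonneg (mul_nonneg hc0.le (sq_nonneg η)) hV]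
  have hGint : ∀ t, Integrable (G t) μ := by
    intro t
    refine (integrable_const (Real.exp (η * (t * R)))).mono'
      ((hGadp t).mono (ℱ.le t)).aestronglyMeasurable ?_
    filter_upwards [hGbd t] with ω h
    rwa [Real.norm_eq_abs, abs_of_pos (hGpos t ω)]
  -- the supermartingale step
  have hstep : ∀ i : ℕ, μ[G (i + 1) | ℱ i] ≤ᵐ[μ] G i := by
    intro i
    set Y : Ω → ℝ := X (i + 1) with hYdef
    set W : Ω → ℝ := μ[(X (i + 1)) ^ 2 | ℱ i] with hWdef
    have hone : (1:ℕ) ≤ i + 1 := Nat.succ_le_succ (Nat.zero_le i)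
    have hsplit : ∀ ω, G (i + 1) ω =
        (G i ω * Real.exp (-(c * η ^ 2) * W ω)) * Real.exp (η * Y ω) := by
      intro ω
      have h1 : S (i + 1) ω = S i ω + Y ω := by
        simp only [hSdef, hYdef]
        rw [Finset.sum_Icc_succ_top hone]
      have h2 : V (i + 1) ω = V i ω + W ω := by
        simp only [hVdef, hWdef]
        rw [Finset.sum_Icc_succ_top hone]
        simp
      simp only [hGdef, h1, h2]
      rw [← Real.exp_add, ← Real.exp_add]
      congr 1
      ring
    set B : Ω → ℝ := fun ω => G i ω * Real.exp (-(c * η ^ 2) * W ω) with hBdef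
    have hBmeas : StronglyMeasurable[ℱ i] B :=
      (hGadp i).mul (Real.continuous_exp.comp_stronglyMeasurable
        (stronglyMeasurable_condExp.const_mul (-(c * η ^ 2))))
    have hBnonneg : ∀ ω, 0 ≤ B ω := fun ω =>
      mul_nonneg (hGpos i ω).le (Real.exp_pos _).le
    have hGsplit : G (i + 1) = B * fun ω => Real.exp (η * Y ω) := by
      funext ω; exact hsplit ω
    have hexpYm : StronglyMeasurable (fun ω => Real.exp (η * Y ω)) :=
      Real.continuous_exp.comp_stronglyMeasurable ((hXm (i + 1)).const_mul η)
    have hexpYint : Integrable (fun ω => Real.exp (η * Y ω)) μ := by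
      refine (integrable_const (Real.exp (η * R))).mono' hexpYm.aestronglyMeasurable ?_
      filter_upwards [hbdd (i + 1)] with ω h
      rw [Real.norm_eq_abs, abs_of_pos (Real.exp_pos _)]
      apply Real.exp_le_exp.2
      exact mul_le_mul_of_nonneg_left ((le_abs_self _).trans h) hη0.le
    have hBmul_int : Integrable (B * fun ω => Real.exp (η * Y ω)) μ := by
      rw [← hGsplit]; exact hGint (i + 1)
    have hpull : μ[B * (fun ω => Real.exp (η * Y ω)) | ℱ i]
        =ᵐ[μ] B * μ[(fun ω => Real.exp (η * Y ω)) | ℱ i] :=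
      condExp_mul_of_stronglyMeasurable_left hBmeas hBmul_int hexpYint
    -- bound the conditional exponential moment
    have hQint : Integrable (fun ω => 1 + η * Y ω + c * η ^ 2 * (Y ω) ^ 2) μ := by
      have h1 : Integrable (fun ω => η * Y ω) μ := (hXint (i + 1)).const_mul η
      have h2 : Integrable (fun ω => c * η ^ 2 * (Y ω) ^ 2) μ := by
        have := (hX2int (i + 1)).const_mul (c * η ^ 2)
        simpa [hYdef] using this
      exact ((integrable_const (1:ℝ)).add h1).add h2
    have hae : (fun ω => Real.exp (η * Y ω))
        ≤ᵐ[μ] fun ω => 1 + η * Y ω + c * η ^ 2 * (Y ω) ^ 2 := by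
      filter_upwards [hbdd (i + 1)] with ω h
      have hx1 : η * Y ω ≤ 1 :=
        le_trans (mul_le_mul_of_nonneg_left ((le_abs_self _).trans h) hη0.le) hηR1
      have hkey := key_exp_ineq hx1
      have heq : c * (η * Y ω) ^ 2 = c * η ^ 2 * (Y ω) ^ 2 := by rw [hcdef]; ring
      rw [← hcdef] at hkey
      linarith
    have hcond1 : μ[(fun ω => Real.exp (η * Y ω)) | ℱ i]
        ≤ᵐ[μ] μ[(fun ω => 1 + η * Y ω + c * η ^ 2 * (Y ω) ^ 2) | ℱ i] :=
      condExp_mono hexpYint hQint hae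
    -- compute the conditional expectation of the quadratic bound
    have hmds' : μ[Y | ℱ i] =ᵐ[μ] 0 := by
      have := hmds (i + 1) hone
      simpa using this
    have hQeq : (fun ω => 1 + η * Y ω + c * η ^ 2 * (Y ω) ^ 2)
        = ((fun _ => (1:ℝ)) + η • Y) + (c * η ^ 2) • ((X (i + 1)) ^ 2) := by
      funext ω
      simp [hYdef, smul_eq_mul]
    have hI1 : Integrable ((fun _ => (1:ℝ)) + η • Y) μ := by
      refine (integrable_const (1:ℝ)).add ?_
      exact (hXint (i + 1)).smul η
    have hI2 : Integrable ((c * η ^ 2) • ((X (i + 1)) ^ 2)) μ := by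
      exact (hX2int (i + 1)).smul (c * η ^ 2)
    have e0 : μ[((fun _ => (1:ℝ)) + η • Y) + (c * η ^ 2) • ((X (i + 1)) ^ 2) | ℱ i]
        =ᵐ[μ] μ[(fun _ => (1:ℝ)) + η • Y | ℱ i] + μ[(c * η ^ 2) • ((X (i + 1)) ^ 2) | ℱ i] :=
      condExp_add hI1 hI2 _
    have e1 : μ[(fun _ => (1:ℝ)) + η • Y | ℱ i]
        =ᵐ[μ] μ[(fun _ => (1:ℝ)) | ℱ i] + μ[η • Y | ℱ i] :=
      condExp_add (integrable_const 1) ((hXint (i + 1)).smul η) _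
    have e2 : μ[(fun _ => (1:ℝ)) | ℱ i] = fun _ => (1:ℝ) := condExp_const (ℱ.le i) 1
    have e3 : μ[η • Y | ℱ i] =ᵐ[μ] (0 : Ω → ℝ) := by
      refine (condExp_smul η Y _).trans ?_
      filter_upwards [hmds'] with ω h
      simp only [Pi.smul_apply, smul_eq_mul, Pi.zero_apply] at h ⊢
      rw [h, mul_zero]
    have e4 : μ[(c * η ^ 2) • ((X (i + 1)) ^ 2) | ℱ i] =ᵐ[μ] (c * η ^ 2) • W :=
      condExp_smul (c * η ^ 2) ((X (i + 1)) ^ 2) _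
    have hcond2 : μ[(fun ω => 1 + η * Y ω + c * η ^ 2 * (Y ω) ^ 2) | ℱ i]
        =ᵐ[μ] fun ω => 1 + c * η ^ 2 * W ω := by
      rw [hQeq]
      filter_upwards [e0, e1, e3, e4] with ω h0 h1 h3 h4
      simp only [Pi.add_apply] at h0 h1
      rw [h0, h1, e2, h3, h4]
      simp [smul_eq_mul]
    have hcond3 : (fun ω => 1 + c * η ^ 2 * W ω)
        ≤ fun ω => Real.exp (c * η ^ 2 * W ω) := by
      intro ω
      have := Real.add_one_le_exp (c * η ^ 2 * W ω)
      simp only []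
      linarith
    -- put everything together
    have hcombined : μ[(fun ω => Real.exp (η * Y ω)) | ℱ i]
        ≤ᵐ[μ] fun ω => Real.exp (c * η ^ 2 * W ω) := by
      filter_upwards [hcond1, hcond2] with ω h1 h2
      exact le_trans h1 (le_of_eq h2 |>.trans (hcond3 ω))
    have hGieq : ∀ ω, B ω * Real.exp (c * η ^ 2 * W ω) = G i ω := by
      intro ω
      simp only [hBdef]
      rw [mul_assoc, ← Real.exp_add, neg_mul, neg_add_cancel, Real.exp_zero, mul_one]
    calc μ[G (i + 1) | ℱ i] = μ[B * (fun ω => Real.exp (η * Y ω)) | ℱ i] := by rw [hGsplit]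
      _ ≤ᵐ[μ] G i := by
          filter_upwards [hpull, hcombined] with ω hp hcb
          rw [hp]
          calc B ω * (μ[(fun ω => Real.exp (η * Y ω)) | ℱ i]) ω
              ≤ B ω * Real.exp (c * η ^ 2 * W ω) :=
                mul_le_mul_of_nonneg_left hcb (hBnonneg ω)
            _ = G i ω := hGieq ω
  have hG : Supermartingale G ℱ μ := supermartingale_nat hGadp hGint hstep
  -- apply the maximal inequality
  set ε : ℝ≥0 := (1 / δ).toNNReal with hεdef
  have hεcoe : (ε : ℝ) = 1 / δ := Real.coe_toNNReal _ (by positivity)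
  have hmax := supermartingale_smul_le_all hG (fun n ω => (hGpos n ω).le) ε
  have hG0 : ∫ ω, G 0 ω ∂μ = 1 := by
    have : ∀ ω, G 0 ω = 1 := by
      intro ω
      simp [hGdef, hSdef, hVdef]
    rw [show (fun ω => G 0 ω) = fun _ => (1:ℝ) from funext this]
    simp
  rw [hG0] at hmax
  simp only [ENNReal.ofReal_one] at hmax
  set U : Set Ω := {ω | ∃ k, (ε : ℝ) ≤ G k ω} with hUdef
  have hU : μ U ≤ ENNReal.ofReal δ := by
    have hε0 : (ε : ℝ≥0∞) ≠ 0 := by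
      simp only [ne_eq, ENNReal.coe_eq_zero]
      rw [← NNReal.coe_eq_zero, hεcoe]
      positivity
    rw [ENNReal.smul_def, smul_eq_mul] at hmax
    have h2 : μ U ≤ (ε : ℝ≥0∞)⁻¹ := by
      rw [ENNReal.le_inv_iff_mul_le, mul_comm]
      exact hmax
    refine h2.trans (le_of_eq ?_)
    have : (ε : ℝ≥0∞) = ENNReal.ofReal (1 / δ) := by
      rw [hεdef]; rfl
    rw [this, one_div, ENNReal.ofReal_inv_of_pos hδ0, inv_inv]
  -- the target event
  set E : Set Ω := {ω | ∀ t : ℕ, 1 ≤ t →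
      S t ω ≤ c * η * V t ω + (1 / η) * Real.log (1 / δ)} with hEdef
  have hEmeas : MeasurableSet E := by
    have : E = ⋂ t : ℕ, {ω | 1 ≤ t → S t ω ≤ c * η * V t ω + (1 / η) * Real.log (1 / δ)} := by
      ext ω; simp [hEdef, Set.mem_iInter]
    rw [this]
    refine MeasurableSet.iInter fun t => ?_
    by_cases ht : 1 ≤ t
    · simp only [ht, forall_true_left]
      have hSm : Measurable (S t) := ((hSmeas t).mono (ℱ.le t)).measurable
      have hVm : Measurable (V t) := ((hVmeas t t (Nat.le_succ t)).mono (ℱ.le t)).measurable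
      exact measurableSet_le hSm (((hVm.const_mul (c * η)).add_const _).comp measurable_id)
    · simp [ht]
  have hcompl : Eᶜ ⊆ U := by
    intro ω hω
    simp only [hEdef, Set.mem_compl_iff, Set.mem_setOf_eq, not_forall] at hω
    obtain ⟨t, ht, hgt⟩ := hω
    push_neg at hgt
    refine ⟨t, ?_⟩
    rw [hεcoe]
    have hlog : Real.log (1 / δ) ≤ η * S t ω - c * η ^ 2 * V t ω := by
      have h := mul_lt_mul_of_pos_left hgt hη0
      have h2 : η * (1 / η * Real.log (1 / δ)) = Real.log (1 / δ) := by
        field_simp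
      rw [mul_add, h2] at h
      nlinarith [h]
    calc (1:ℝ) / δ = Real.exp (Real.log (1 / δ)) :=
          (Real.exp_log (by positivity)).symm
      _ ≤ G t ω := Real.exp_le_exp.2 hlog
  have hEcompl : μ Eᶜ ≤ ENNReal.ofReal δ := le_trans (measure_mono hcompl) hU
  have hgoal : (1:ℝ≥0∞) - ENNReal.ofReal δ ≤ μ E := by
    have := prob_compl_eq_one_sub (μ := μ) hEmeas
    -- this : μ Eᶜ = 1 - μ E
    rw [this] at hEcompl
    have := tsub_le_iff_right.1 hEcompl
    exact tsub_le_iff_right.2 (by rwa [add_comm] at this)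
  have hfinal : (1:ℝ) - δ ≤ (μ E).toReal := by
    have h1 : ((1:ℝ≥0∞) - ENNReal.ofReal δ).toReal = 1 - δ := by
      rw [ENNReal.toReal_sub_of_le (ENNReal.ofReal_le_one.2 hδ1.le) ENNReal.one_ne_top]
      simp [ENNReal.toReal_ofReal hδ0.le]
    rw [← h1]
    exact ENNReal.toReal_mono (measure_ne_top μ E) hgoal
  exact hfinal
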